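/- Let U be an open subset of a complex Banach space E, let v be a weight on U, let F be a complex Banach space, and let f ∈ H_v^∞(U,F). Then the v-range (vf)(U) = {v(x)f(x) : x ∈ U} is relatively compact in F if and only if the composition ι_F∘f : U → ℓ∞(B_{F*}) is v-approximable, i.e., ι_F∘f is the limit in the norm ‖·‖_v of a sequence of mappings in H_v^∞(U,ℓ∞(B_{F*})) of finite v-rank. That is, the injective hull of the ideal of v-approximable weighted holomorphic mappings coincides with the ideal of v-compact weighted holomorphic mappings (both carry the norm ‖·‖_v). -/

import Mathlib

open scoped ENNReal
open Set

noncomputable section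

universe u v w

/-- A bundled complex Banach space. -/
structure BanachSp : Type (u + 1) where
  α : Type u
  [grp : NormedAddCommGroup α]
  [mod : NormedSpace ℂ α]
  [cpl : CompleteSpace α]

attribute [instance] BanachSp.grp BanachSp.mod BanachSp.cpl

instance : CoeSort BanachSp (Type u) := ⟨BanachSp.α⟩

section Defs

variable {E : Type u} {F : Type v} [NormedAddCommGroup E] [NormedSpace ℂ E]
  [NormedAddCommGroup F] [NormedSpace ℂ F]

/-- `v` is a weight on `U`: continuous and strictly positive there. -/
def IsWeight (U : Set E) (v : E → ℝ) : Prop :=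
  ContinuousOn v U ∧ ∀ x ∈ U, 0 < v x

/-- `f` belongs to `H_v^∞(U, F)`: holomorphic on `U` with `sup_{x ∈ U} v x * ‖f x‖ < ∞`. -/
def HvBdd (U : Set E) (v : E → ℝ) (f : E → F) : Prop :=
  DifferentiableOn ℂ f U ∧ BddAbove ((fun x => v x * ‖f x‖) '' U)

/-- The weighted supremum norm `‖f‖_v = sup_{x ∈ U} v x * ‖f x‖`. -/
def hvNorm (U : Set E) (v : E → ℝ) (f : E → F) : ℝ :=
  sSup ((fun x => v x * ‖f x‖) '' U)

end Defs

section Iota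

variable (F : Type u) [NormedAddCommGroup F] [NormedSpace ℂ F]

/-- The closed unit ball of the dual space `F*`. -/
def BallDual : Type u := {φ : StrongDual ℂ F // ‖φ‖ ≤ 1}

instance : Nonempty (BallDual F) := ⟨⟨0, by simp⟩⟩

/-- `ℓ∞(B_{F*})`, the space of bounded scalar functions on the closed unit ball of `F*`. -/
abbrev Linf : Type u := lp (fun _ : BallDual F => ℂ) ∞

/-- The canonical embedding `ι_F : F → ℓ∞(B_{F*})`, `⟨ι_F y, φ⟩ = φ y`. -/
def iotaFun (y : F) : Linf F :=
  ⟨fun φ => φ.1 y, memℓp_infty ⟨‖y‖, by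
    rintro r ⟨φ, rfl⟩
    calc ‖φ.1 y‖ ≤ ‖φ.1‖ * ‖y‖ := φ.1.le_opNorm y
      _ ≤ 1 * ‖y‖ := by
          have := φ.2
          exact mul_le_mul_of_nonneg_right this (norm_nonneg y)
      _ = ‖y‖ := one_mul _⟩⟩

/-- The canonical embedding `ι_F : F → ℓ∞(B_{F*})` as a continuous linear map. -/
def iota : F →L[ℂ] Linf F :=
  LinearMap.mkContinuous
    { toFun := iotaFun F
      map_add' := by
        intro y z
        apply lp.ext
        rw [lp.coeFn_add]
        funext φ
        show φ.1 (y + z) = φ.1 y + φ.1 z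
        exact map_add φ.1 y z
      map_smul' := by
        intro c y
        apply lp.ext
        rw [lp.coeFn_smul]
        funext φ
        show φ.1 (c • y) = c • φ.1 y
        exact map_smul φ.1 c y }
    1 (by
      intro y
      rw [one_mul]
      refine lp.norm_le_of_forall_le (norm_nonneg y) fun φ => ?_
      calc ‖φ.1 y‖ ≤ ‖φ.1‖ * ‖y‖ := φ.1.le_opNorm y
        _ ≤ 1 * ‖y‖ := mul_le_mul_of_nonneg_right φ.2 (norm_nonneg y)
        _ = ‖y‖ := one_mul _)

/-- `ℓ∞(B_{F*})` as a bundled Banach space. -/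
def LinfSp : BanachSp.{u} := ⟨Linf F⟩

end Iota

/-- An assignment of a class of weighted holomorphic mappings, together with a
"norm" function, to every component `(U, v, F)`. -/
structure WHAssignment : Type (u + 1) where
  mem : ∀ (E : BanachSp.{u}) (U : Set E) (v : E → ℝ) (F : BanachSp.{u}), (E → F) → Prop
  nrm : ∀ (E : BanachSp.{u}) (U : Set E) (v : E → ℝ) (F : BanachSp.{u}), (E → F) → ℝ

/-- `[I, ‖·‖_I]` is a normed weighted holomorphic ideal. -/
structure IsNormedWHIdeal (I : WHAssignment.{u}) : Prop where
  mem_hv : ∀ (E : BanachSp.{u}) (U : Set E.α) (v : E.α → ℝ), IsOpen U → IsWeight U v →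
    ∀ (F : BanachSp.{u}) (f : E.α → F.α), I.mem E U v F f → HvBdd U v f
  zero_mem : ∀ (E : BanachSp.{u}) (U : Set E.α) (v : E.α → ℝ), IsOpen U → IsWeight U v →
    ∀ (F : BanachSp.{u}), I.mem E U v F (fun _ => 0)
  add_mem : ∀ (E : BanachSp.{u}) (U : Set E.α) (v : E.α → ℝ), IsOpen U → IsWeight U v →
    ∀ (F : BanachSp.{u}) (f g : E.α → F.α), I.mem E U v F f → I.mem E U v F g →
      I.mem E U v F (fun x => f x + g x)
  smul_mem : ∀ (E : BanachSp.{u}) (U : Set E.α) (v : E.α → ℝ), IsOpen U → IsWeight U v →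
    ∀ (F : BanachSp.{u}) (c : ℂ) (f : E.α → F.α), I.mem E U v F f →
      I.mem E U v F (fun x => c • f x)
  nrm_nonneg : ∀ (E : BanachSp.{u}) (U : Set E.α) (v : E.α → ℝ), IsOpen U → IsWeight U v →
    ∀ (F : BanachSp.{u}) (f : E.α → F.α), I.mem E U v F f → 0 ≤ I.nrm E U v F f
  nrm_eq_zero : ∀ (E : BanachSp.{u}) (U : Set E.α) (v : E.α → ℝ), IsOpen U → IsWeight U v →
    ∀ (F : BanachSp.{u}) (f : E.α → F.α), I.mem E U v F f → I.nrm E U v F f = 0 →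
      ∀ x ∈ U, f x = 0
  nrm_add_le : ∀ (E : BanachSp.{u}) (U : Set E.α) (v : E.α → ℝ), IsOpen U → IsWeight U v →
    ∀ (F : BanachSp.{u}) (f g : E.α → F.α), I.mem E U v F f → I.mem E U v F g →
      I.nrm E U v F (fun x => f x + g x) ≤ I.nrm E U v F f + I.nrm E U v F g
  nrm_smul : ∀ (E : BanachSp.{u}) (U : Set E.α) (v : E.α → ℝ), IsOpen U → IsWeight U v →
    ∀ (F : BanachSp.{u}) (c : ℂ) (f : E.α → F.α), I.mem E U v F f →
      I.nrm E U v F (fun x => c • f x) = ‖c‖ * I.nrm E U v F f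
  hv_le_nrm : ∀ (E : BanachSp.{u}) (U : Set E.α) (v : E.α → ℝ), IsOpen U → IsWeight U v →
    ∀ (F : BanachSp.{u}) (f : E.α → F.α), I.mem E U v F f →
      hvNorm U v f ≤ I.nrm E U v F f
  unit_mem : ∀ (E : BanachSp.{u}) (U : Set E.α) (v : E.α → ℝ), IsOpen U → IsWeight U v →
    ∀ (F : BanachSp.{u}) (h : E.α → ℂ), HvBdd U v h → ∀ y : F.α,
      I.mem E U v F (fun x => h x • y) ∧
        I.nrm E U v F (fun x => h x • y) = hvNorm U v h * ‖y‖
  comp_mem : ∀ (E : BanachSp.{u}) (U : Set E.α) (v : E.α → ℝ), IsOpen U → IsWeight U v →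
    ∀ (V : Set E.α), IsOpen V → V ⊆ U →
    ∀ h : E.α → E.α, DifferentiableOn ℂ h V → Set.MapsTo h V U →
    ∀ c : ℝ, 0 ≤ c → (∀ x ∈ V, v x ≤ c * v (h x)) →
    ∀ (F G : BanachSp.{u}) (T : F.α →L[ℂ] G.α) (f : E.α → F.α), I.mem E U v F f →
      I.mem E V v G (fun x => T (f (h x))) ∧
        I.nrm E V v G (fun x => T (f (h x))) ≤ ‖T‖ * I.nrm E U v F f * c

/-- `[I, ‖·‖_I]` is a Banach weighted holomorphic ideal: a normed one with complete components. -/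
structure IsBanachWHIdeal (I : WHAssignment.{u}) extends IsNormedWHIdeal I : Prop where
  complete : ∀ (E : BanachSp.{u}) (U : Set E.α) (v : E.α → ℝ), IsOpen U → IsWeight U v →
    ∀ (F : BanachSp.{u}) (f : ℕ → E.α → F.α), (∀ n, I.mem E U v F (f n)) →
      (∀ ε : ℝ, 0 < ε → ∃ N : ℕ, ∀ m ≥ N, ∀ n ≥ N,
        I.nrm E U v F (fun x => f m x - f n x) < ε) →
      ∃ g : E.α → F.α, I.mem E U v F g ∧
        ∀ ε : ℝ, 0 < ε → ∃ N : ℕ, ∀ n ≥ N, I.nrm E U v F (fun x => f n x - g x) < ε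

/-- Injectivity of a normed weighted holomorphic ideal. -/
def WHInjective (I : WHAssignment.{u}) : Prop :=
  ∀ (E : BanachSp.{u}) (U : Set E.α) (v : E.α → ℝ), IsOpen U → IsWeight U v →
  ∀ (F G : BanachSp.{u}) (f : E.α → F.α), HvBdd U v f →
  ∀ ι : F.α →ₗᵢ[ℂ] G.α, I.mem E U v G (fun x => ι (f x)) →
    I.mem E U v F f ∧ I.nrm E U v F f = I.nrm E U v G (fun x => ι (f x))

/-- The injective hull `[I^inj, ‖·‖_{I^inj}]` of a weighted holomorphic ideal. -/
def whInj (I : WHAssignment.{u}) : WHAssignment.{u} where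
  mem E U v F f := HvBdd U v f ∧ I.mem E U v (LinfSp F.α) (fun x => iota F.α (f x))
  nrm E U v F f := I.nrm E U v (LinfSp F.α) (fun x => iota F.α (f x))

/-- The order relation `[I, ‖·‖_I] ≤ [J, ‖·‖_J]` between weighted holomorphic ideals. -/
def WHle (I J : WHAssignment.{u}) : Prop :=
  ∀ (E : BanachSp.{u}) (U : Set E.α) (v : E.α → ℝ), IsOpen U → IsWeight U v →
  ∀ (F : BanachSp.{u}) (f : E.α → F.α), I.mem E U v F f →
    J.mem E U v F f ∧ J.nrm E U v F f ≤ I.nrm E U v F f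

/-- The domination property: `‖Σ λᵢ v(xᵢ) f(xᵢ)‖ ≤ ‖Σ λᵢ v(xᵢ) g(xᵢ)‖` for all finite families. -/
def Dominates {E : Type u} {F : Type v} {G : Type w} [NormedAddCommGroup E] [NormedSpace ℂ E]
    [NormedAddCommGroup F] [NormedSpace ℂ F] [NormedAddCommGroup G] [NormedSpace ℂ G]
    (U : Set E) (v : E → ℝ) (f : E → F) (g : E → G) : Prop :=
  ∀ (n : ℕ) (lam : Fin n → ℂ) (x : Fin n → E), (∀ i, x i ∈ U) →
    ‖∑ i, lam i • v (x i) • f (x i)‖ ≤ ‖∑ i, lam i • v (x i) • g (x i)‖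



/-- `g` has finite v-rank: its v-range is contained in a finite-dimensional subspace. -/
def FiniteVRank {E : Type u} {F : Type v} [NormedAddCommGroup E] [NormedSpace ℂ E]
    [NormedAddCommGroup F] [NormedSpace ℂ F] (U : Set E) (v : E → ℝ) (g : E → F) : Prop :=
  ∃ W : Submodule ℂ F, FiniteDimensional ℂ W ∧ ∀ x ∈ U, v x • g x ∈ W


section Helpers

variable (F : Type u) [NormedAddCommGroup F] [NormedSpace ℂ F]

lemma iota_norm (y : F) : ‖iota F y‖ = ‖y‖ := by
  refine le_antisymm ?_ ?_
  · refine lp.norm_le_of_forall_le (norm_nonneg y) fun φ => ?_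
    calc ‖φ.1 y‖ ≤ ‖φ.1‖ * ‖y‖ := φ.1.le_opNorm y
      _ ≤ 1 * ‖y‖ := mul_le_mul_of_nonneg_right φ.2 (norm_nonneg y)
      _ = ‖y‖ := one_mul _
  · rcases eq_or_ne y 0 with rfl | hy
    · rw [norm_zero]; exact norm_nonneg _
    · obtain ⟨g, hg1, hgy⟩ := exists_dual_vector ℂ y (norm_ne_zero_iff.2 hy)
      have hγ : (⟨g, hg1.le⟩ : BallDual F) = ⟨g, hg1.le⟩ := rfl
      have h1 : ‖(iota F y) (⟨g, hg1.le⟩ : BallDual F)‖ ≤ ‖iota F y‖ :=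
        lp.norm_apply_le_norm ENNReal.top_ne_zero _ _
      have h2 : (iota F y) (⟨g, hg1.le⟩ : BallDual F) = g y := rfl
      rw [h2, hgy] at h1
      rwa [RCLike.norm_ofReal, abs_of_nonneg (norm_nonneg y)] at h1

lemma iota_isometry : Isometry (iota F) :=
  AddMonoidHomClass.isometry_of_norm _ (iota_norm F)

end Helpers

set_option maxHeartbeats 1000000
set_option synthInstance.maxHeartbeats 400000

section Main

variable {E : Type u} [NormedAddCommGroup E] [NormedSpace ℂ E]
  {F : Type u} [NormedAddCommGroup F] [NormedSpace ℂ F]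

lemma hvNorm_nonneg (U : Set E) (v : E → ℝ) (hv : IsWeight U v) (g : E → F) :
    0 ≤ hvNorm U v g := by
  apply Real.sSup_nonneg
  rintro r ⟨x, hx, rfl⟩
  exact mul_nonneg (hv.2 x hx).le (norm_nonneg _)

lemma exists_finite_rank_approx
    (U : Set E) (v : E → ℝ) (hv : IsWeight U v)
    (f : E → F) (hf : HvBdd U v f)
    (hK : IsCompact (closure ((fun x => v x • f x) '' U)))
    (ε : ℝ) (hε : 0 < ε) :
    ∃ h : E → Linf F, HvBdd U v h ∧ FiniteVRank U v h ∧
      ∀ x ∈ U, v x * ‖iota F (f x) - h x‖ ≤ ε := by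
  rcases Set.eq_empty_or_nonempty U with hUe | hUne
  · refine ⟨fun _ => 0, ⟨(differentiable_const 0).differentiableOn, ?_⟩,
      ⟨⊥, inferInstance, fun x hx => by simp [hUe] at hx⟩, fun x hx => by simp [hUe] at hx⟩
    rw [hUe, Set.image_empty]
    exact bddAbove_empty
  set K : Set F := (fun x => v x • f x) '' U with hKdef
  have hKne : K.Nonempty := hUne.image _
  have hKtb : TotallyBounded K := hK.totallyBounded.subset subset_closure
  have hε4 : (0:ℝ) < ε / 4 := by linarith
  obtain ⟨C, hC⟩ := isBounded_iff_forall_norm_le.1 hK.isBounded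
  have hC0 : 0 ≤ C := le_trans (norm_nonneg _) (hC _ (subset_closure hKne.choose_spec))
  obtain ⟨t, htK, htfin, htcov⟩ := hKtb.exists_subset (Metric.dist_mem_uniformity hε4)
  haveI : Fintype ↥t := htfin.fintype
  set Φ : BallDual F → (↥t → ℂ) := fun γ i => γ.1 i.1 with hΦdef
  have hΦbdd : ∀ γ, ‖Φ γ‖ ≤ C := by
    intro γ
    rw [pi_norm_le_iff_of_nonneg hC0]
    intro i
    calc ‖γ.1 i.1‖ ≤ ‖γ.1‖ * ‖i.1‖ := γ.1.le_opNorm i.1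
      _ ≤ 1 * C := mul_le_mul γ.2 (hC _ (subset_closure (htK i.2))) (norm_nonneg _) zero_le_one
      _ = C := one_mul C
  have hΦtb : TotallyBounded (Set.range Φ) := by
    have hsub : Set.range Φ ⊆ Metric.closedBall 0 C := by
      rintro p ⟨γ, rfl⟩
      rw [Metric.mem_closedBall, dist_zero_right]
      exact hΦbdd γ
    have hb : Bornology.IsBounded (Set.range Φ) :=
      (Metric.isBounded_closedBall (x := (0 : ↥t → ℂ)) (r := C)).subset hsub
    exact hb.isCompact_closure.totallyBounded.subset subset_closure
  obtain ⟨u, huR, hufin, hucov⟩ := hΦtb.exists_subset (Metric.dist_mem_uniformity hε4)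
  haveI : Fintype ↥u := hufin.fintype
  choose sel hsel using fun q : ↥u => (huR q.2 : q.1 ∈ Set.range Φ)
  have hcex : ∀ γ, ∃ q : ↥u, dist (Φ γ) q.1 < ε / 4 := by
    intro γ
    rcases Set.mem_iUnion₂.1 (hucov (Set.mem_range_self γ)) with ⟨p, hp, hpd⟩
    exact ⟨⟨p, hp⟩, hpd⟩

  choose c hc using hcex
  -- the finite-rank operator
  set Tl : Linf F →ₗ[ℂ] Linf F :=
    { toFun := fun z => ⟨fun γ => z (sel (c γ)), memℓp_infty ⟨‖z‖, by
        rintro r ⟨γ, rfl⟩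
        exact lp.norm_apply_le_norm ENNReal.top_ne_zero z _⟩⟩
      map_add' := by
        intro y z
        apply lp.ext
        refine Eq.trans ?_ (lp.coeFn_add _ _).symm
        funext γ
        show (y + z) (sel (c γ)) = y (sel (c γ)) + z (sel (c γ))
        rw [lp.coeFn_add]
        rfl
      map_smul' := by
        intro a z
        apply lp.ext
        refine Eq.trans ?_ (lp.coeFn_smul _ _).symm
        funext γ
        show (a • z) (sel (c γ)) = a • z (sel (c γ))
        rw [lp.coeFn_smul]
        rfl } with hTldef
  have hTlapp : ∀ (z : Linf F) (γ : BallDual F), (Tl z) γ = z (sel (c γ)) := fun _ _ => rfl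
  have hTlnorm : ∀ z : Linf F, ‖Tl z‖ ≤ ‖z‖ := by
    intro z
    refine lp.norm_le_of_forall_le (norm_nonneg z) fun γ => ?_
    rw [hTlapp]
    exact lp.norm_apply_le_norm ENNReal.top_ne_zero z _
  set T : Linf F →L[ℂ] Linf F := LinearMap.mkContinuous Tl 1
    (fun z => by rw [one_mul]; exact hTlnorm z) with hTdef
  have hTapp : ∀ (z : Linf F) (γ : BallDual F), (T z) γ = z (sel (c γ)) := fun _ _ => rfl
  have hTnorm : ∀ z : Linf F, ‖T z‖ ≤ ‖z‖ := hTlnorm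
  -- the finite-dimensional range
  set ind : ↥u → Linf F := fun q => ⟨fun γ => if c γ = q then 1 else 0, memℓp_infty ⟨1, by
    rintro r ⟨γ, rfl⟩
    dsimp only
    split <;> simp⟩⟩ with hinddef
  set W : Submodule ℂ (Linf F) := Submodule.span ℂ (Set.range ind) with hWdef
  have hTmem : ∀ z : Linf F, T z ∈ W := by
    intro z
    have hrepr : T z = ∑ q : ↥u, z (sel q) • ind q := by
      apply lp.ext
      rw [lp.coeFn_sum]
      funext γ
      rw [Finset.sum_apply]
      have hterm : ∀ q : ↥u, (z (sel q) • ind q) γ = if c γ = q then z (sel q) else 0 := by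
        intro q
        rw [lp.coeFn_smul]
        show z (sel q) • (if c γ = q then (1:ℂ) else 0) = _
        rw [smul_eq_mul, mul_ite, mul_one, mul_zero]
      have hsum : ∑ q : ↥u, (z (sel q) • ind q) γ
          = ∑ q : ↥u, if c γ = q then z (sel q) else 0 :=
        Finset.sum_congr rfl fun q _ => hterm q
      rw [hTapp, hsum, Finset.sum_ite_eq, if_pos (Finset.mem_univ _)]
    rw [hrepr]
    exact Submodule.sum_mem _ fun q _ =>
      Submodule.smul_mem _ _ (Submodule.subset_span (Set.mem_range_self q))
  refine ⟨fun x => T (iota F (f x)), ⟨?_, ?_⟩, ⟨W, FiniteDimensional.span_of_finite ℂ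
    (Set.finite_range ind), fun x hx => ?_⟩, fun x hx => ?_⟩
  · exact (T.comp (iota F)).differentiable.comp_differentiableOn hf.1
  · obtain ⟨M, hM⟩ := hf.2
    refine ⟨M, ?_⟩
    rintro r ⟨x, hx, rfl⟩
    have h1 : ‖T (iota F (f x))‖ ≤ ‖f x‖ := by
      refine le_trans (hTnorm _) ?_
      rw [iota_norm]
    refine le_trans (mul_le_mul_of_nonneg_left h1 (hv.2 x hx).le) ?_
    exact hM (Set.mem_image_of_mem _ hx)
  · have : v x • T (iota F (f x)) = T (v x • iota F (f x)) :=
      (T.map_smul_of_tower (v x) _).symm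
    exact (congrArg (· ∈ W) this).mpr (hTmem _)
  · set y := v x • f x with hy
    have hyK : y ∈ K := Set.mem_image_of_mem _ hx
    rcases Set.mem_iUnion₂.1 (htcov hyK) with ⟨s, hs, hds⟩
    have hds' : dist y s < ε / 4 := hds
    have hiotasmul : iota F y = v x • iota F (f x) := (iota F).map_smul_of_tower (v x) _
    have key : v x * ‖iota F (f x) - T (iota F (f x))‖ = ‖iota F y - T (iota F y)‖ := by
      rw [hiotasmul, T.map_smul_of_tower, ← smul_sub, norm_smul,
        Real.norm_of_nonneg (hv.2 x hx).le]
    rw [key]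
    refine lp.norm_le_of_forall_le hε.le fun γ => ?_
    have happ : (iota F y - T (iota F y)) γ = γ.1 y - (sel (c γ)).1 y := by
      rw [lp.coeFn_sub]
      rfl
    rw [happ]
    set γ' := sel (c γ) with hγ'
    have b1 : ‖γ.1 y - γ.1 s‖ ≤ ε / 4 := by
      rw [← map_sub]
      calc ‖γ.1 (y - s)‖ ≤ ‖γ.1‖ * ‖y - s‖ := γ.1.le_opNorm _
        _ ≤ 1 * ‖y - s‖ := mul_le_mul_of_nonneg_right γ.2 (norm_nonneg _)
        _ = ‖y - s‖ := one_mul _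
        _ ≤ ε / 4 := by rw [← dist_eq_norm]; exact hds'.le
    have b3 : ‖γ'.1 s - γ'.1 y‖ ≤ ε / 4 := by
      rw [← map_sub]
      calc ‖γ'.1 (s - y)‖ ≤ ‖γ'.1‖ * ‖s - y‖ := γ'.1.le_opNorm _
        _ ≤ 1 * ‖s - y‖ := mul_le_mul_of_nonneg_right γ'.2 (norm_nonneg _)
        _ = ‖s - y‖ := one_mul _
        _ ≤ ε / 4 := by rw [← dist_eq_norm, dist_comm]; exact hds'.le
    have b2 : ‖γ.1 s - γ'.1 s‖ ≤ ε / 4 := by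
      have h1 : γ.1 s = Φ γ ⟨s, hs⟩ := rfl
      have h2 : γ'.1 s = Φ γ' ⟨s, hs⟩ := rfl
      rw [h1, h2, ← dist_eq_norm]
      calc dist (Φ γ ⟨s, hs⟩) (Φ γ' ⟨s, hs⟩) ≤ dist (Φ γ) (Φ γ') := dist_le_pi_dist _ _ _
        _ = dist (Φ γ) (c γ).1 := by rw [hsel (c γ)]
        _ ≤ ε / 4 := (hc γ).le
    calc ‖γ.1 y - γ'.1 y‖ = ‖(γ.1 y - γ.1 s) + (γ.1 s - γ'.1 s) + (γ'.1 s - γ'.1 y)‖ := by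
          ring_nf
      _ ≤ ‖(γ.1 y - γ.1 s) + (γ.1 s - γ'.1 s)‖ + ‖γ'.1 s - γ'.1 y‖ := norm_add_le _ _
      _ ≤ ‖γ.1 y - γ.1 s‖ + ‖γ.1 s - γ'.1 s‖ + ‖γ'.1 s - γ'.1 y‖ := by
          exact add_le_add (norm_add_le _ _) le_rfl
      _ ≤ ε / 4 + ε / 4 + ε / 4 := by exact add_le_add (add_le_add b1 b2) b3
      _ ≤ ε := by linarith

end Main

/-- `(vf)(U)` is relatively compact iff `ι_F ∘ f` is v-approximable, i.e. a
`‖·‖_v`-limit of a sequence of finite v-rank weighted holomorphic mappings into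
`ℓ∞(B_{F*})`. -/
theorem vcompact_iff_iota_comp_vapproximable
    (E : Type u) [NormedAddCommGroup E] [NormedSpace ℂ E] [CompleteSpace E]
    (U : Set E) (v : E → ℝ) (hU : IsOpen U) (hv : IsWeight U v)
    (F : Type u) [NormedAddCommGroup F] [NormedSpace ℂ F] [CompleteSpace F]
    (f : E → F) (hf : HvBdd U v f) :
    IsCompact (closure ((fun x => v x • f x) '' U)) ↔
      ∃ h : ℕ → E → Linf F,
        (∀ n, HvBdd U v (h n) ∧ FiniteVRank U v (h n)) ∧
        Filter.Tendsto (fun n => hvNorm U v (fun x => iota F (f x) - h n x))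
          Filter.atTop (nhds 0) := by
  constructor
  · intro hK
    choose h hh1 hh2 hh3 using fun n : ℕ =>
      exists_finite_rank_approx U v hv f hf hK (1 / ((n : ℝ) + 1))
        (by positivity)
    refine ⟨h, fun n => ⟨hh1 n, hh2 n⟩, ?_⟩
    refine squeeze_zero (fun n => hvNorm_nonneg U v hv _) (fun n => ?_)
      tendsto_one_div_add_atTop_nhds_zero_nat
    refine Real.sSup_le ?_ (by positivity)
    rintro r ⟨x, hx, rfl⟩
    exact hh3 n x hx
  · rintro ⟨h, hh, htend⟩
    set K : Set F := (fun x => v x • f x) '' U with hKdef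
    suffices htb : TotallyBounded K by
      exact TotallyBounded.isCompact_of_isClosed htb.closure isClosed_closure
    rw [← totallyBounded_image_iff (iota_isometry F).isUniformInducing]
    rw [Metric.totallyBounded_iff]
    intro ε hε
    -- pick a good approximant
    obtain ⟨N, hN⟩ := (Metric.tendsto_atTop.1 htend) (ε / 2) (by linarith)
    have hNlt : hvNorm U v (fun x => iota F (f x) - h N x) < ε / 2 := by
      have := hN N le_rfl
      rw [Real.dist_eq, sub_zero] at this
      exact lt_of_le_of_lt (le_abs_self _) this
    obtain ⟨hHv, hFR⟩ := hh N
    obtain ⟨W, hWfd, hWmem⟩ := hFR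
    obtain ⟨M1, hM1⟩ := hf.2
    obtain ⟨M2, hM2⟩ := hHv.2
    -- pointwise bound by the norm
    have hbdd : BddAbove ((fun x => v x * ‖iota F (f x) - h N x‖) '' U) := by
      refine ⟨M1 + M2, ?_⟩
      rintro r ⟨x, hx, rfl⟩
      have hvx : 0 ≤ v x := (hv.2 x hx).le
      calc v x * ‖iota F (f x) - h N x‖
          ≤ v x * (‖iota F (f x)‖ + ‖h N x‖) :=
            mul_le_mul_of_nonneg_left (norm_sub_le _ _) hvx
        _ = v x * ‖f x‖ + v x * ‖h N x‖ := by rw [iota_norm, mul_add]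
        _ ≤ M1 + M2 := add_le_add (hM1 (Set.mem_image_of_mem _ hx))
            (hM2 (Set.mem_image_of_mem _ hx))
    have hptw : ∀ x ∈ U, v x * ‖iota F (f x) - h N x‖ < ε / 2 := fun x hx =>
      lt_of_le_of_lt (le_csSup hbdd (Set.mem_image_of_mem _ hx)) hNlt
    -- the v-range of h N is totally bounded
    set S : Set (Linf F) := (fun x => v x • h N x) '' U with hSdef
    have hSW : S ⊆ (W : Set (Linf F)) := by
      rintro z ⟨x, hx, rfl⟩
      exact hWmem x hx
    have hStb : TotallyBounded S := by
      haveI := hWfd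
      haveI : ProperSpace ↥W := FiniteDimensional.proper ℂ ↥W
      have hpre : TotallyBounded ((Subtype.val : ↥W → Linf F) ⁻¹' S) := by
        have hb : Bornology.IsBounded ((Subtype.val : ↥W → Linf F) ⁻¹' S) := by
          rw [isBounded_iff_forall_norm_le]
          refine ⟨M2, ?_⟩
          rintro w hw
          rcases hw with ⟨x, hx, hxw⟩
          have hw' : (w : Linf F) = v x • h N x := hxw.symm
          calc ‖w‖ = ‖(w : Linf F)‖ := rfl
            _ = v x * ‖h N x‖ := by
                rw [hw', norm_smul, Real.norm_of_nonneg (hv.2 x hx).le]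
            _ ≤ M2 := hM2 (Set.mem_image_of_mem _ hx)
        exact hb.isCompact_closure.totallyBounded.subset subset_closure
      have himg := hpre.image uniformContinuous_subtype_val
      have heq : (Subtype.val : ↥W → Linf F) '' ((Subtype.val : ↥W → Linf F) ⁻¹' S) = S := by
        apply Set.Subset.antisymm
        · exact Set.image_preimage_subset _ _
        · intro z hz
          exact ⟨⟨z, hSW hz⟩, hz, rfl⟩
      rwa [heq] at himg
    obtain ⟨tS, htSfin, htScov⟩ := Metric.totallyBounded_iff.1 hStb (ε / 2) (by linarith)
    refine ⟨tS, htSfin, ?_⟩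
    rintro z ⟨y, ⟨x, hx, rfl⟩, rfl⟩
    have hd1 : dist (iota F (v x • f x)) (v x • h N x) < ε / 2 := by
      rw [dist_eq_norm, (iota F).map_smul_of_tower, ← smul_sub, norm_smul,
        Real.norm_of_nonneg (hv.2 x hx).le]
      exact hptw x hx
    rcases Set.mem_iUnion₂.1 (htScov (Set.mem_image_of_mem _ hx)) with ⟨s, hs, hds⟩
    rw [Metric.mem_ball] at hds
    refine Set.mem_iUnion₂.2 ⟨s, hs, ?_⟩
    rw [Metric.mem_ball]
    calc dist (iota F (v x • f x)) s
        ≤ dist (iota F (v x • f x)) (v x • h N x) + dist (v x • h N x) s := dist_triangle _ _ _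
      _ < ε / 2 + ε / 2 := add_lt_add hd1 hds
      _ = ε := by ring

end
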